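/- In the symmetric-algorithm setting, suppose the algorithm is (ε, ν)-stable for some ε ≥ 0 and ν ∈ (0,1), and let α satisfy 1/(n+1) ≤ α and α + √ν < 1. Then P(|Y − f̂(X)| ≤ q_{n,α}{r_i} + ε) ≥ 1 − α − 2√ν. -/

import Mathlib

open MeasureTheory ProbabilityTheory
open scoped ENNReal

/-- The `k`-th smallest value (1-indexed) among `v 0, ..., v (n-1)`. -/
noncomputable def kthSmallest {n : ℕ} (k : ℕ) (v : Fin n → ℝ) : ℝ :=
  (Multiset.sort (Multiset.map v Finset.univ.val) (· ≤ ·)).getD (k - 1) 0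

/-- For `β ≥ 1/(n+1)`, `q_{n,β}{v}` is the `⌈(1 − β)(n + 1)⌉`-th smallest value among
`v 0, ..., v (n-1)`. -/
noncomputable def empQuantile {n : ℕ} (β : ℝ) (v : Fin n → ℝ) : ℝ :=
  kthSmallest ⌈(1 - β) * ((n:ℝ) + 1)⌉₊ v

lemma sorted_getD_le_iff : ∀ {l : List ℝ}, l.Pairwise (· ≤ ·) → ∀ {j : ℕ}, j < l.length → ∀ t : ℝ,
    (l.getD j 0 ≤ t ↔ j < l.countP (fun x => decide (x ≤ t))) := by
  intro l hl
  induction l with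
  | nil => intro j hj; simp at hj
  | cons a l ih =>
    rw [List.pairwise_cons] at hl
    obtain ⟨ha, hl'⟩ := hl
    intro j hj t
    cases j with
    | zero =>
      simp only [List.getD_cons_zero, List.countP_cons]
      constructor
      · intro h; simp [h]
      · intro h
        by_contra hat
        have hc : l.countP (fun x => decide (x ≤ t)) = 0 := by
          rw [List.countP_eq_zero]
          intro x hx
          simp only [decide_eq_true_eq]
          exact fun hxt => hat ((ha x hx).trans hxt)
        simp [hc, hat] at h
    | succ j =>
      simp only [List.getD_cons_succ, List.countP_cons]
      have hj' : j < l.length := by simpa using hj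
      by_cases hat : a ≤ t
      · simp only [hat, decide_true, if_true, Nat.succ_lt_succ_iff]
        simpa using ih hl' hj' t
      · have hc : l.countP (fun x => decide (x ≤ t)) = 0 := by
          rw [List.countP_eq_zero]
          intro x hx
          simp only [decide_eq_true_eq]
          exact fun hxt => hat ((ha x hx).trans hxt)
        constructor
        · intro h
          have := (ih hl' hj' t).mp h
          omega
        · intro h; simp [hc, hat] at h

lemma kthSmallest_le_iff {N k : ℕ} (hk1 : 1 ≤ k) (hkN : k ≤ N) (v : Fin N → ℝ) (t : ℝ) :
    kthSmallest k v ≤ t ↔ k ≤ (Finset.univ.filter (fun i => v i ≤ t)).card := by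
  classical
  unfold kthSmallest
  have hlen : (Multiset.sort (Multiset.map v Finset.univ.val) (· ≤ ·)).length = N := by
    rw [Multiset.length_sort, Multiset.card_map]
    simp
  have hs := Multiset.pairwise_sort (s := Multiset.map v Finset.univ.val) (r := (· ≤ ·))
  have hj : k - 1 < (Multiset.sort (Multiset.map v Finset.univ.val) (· ≤ ·)).length := by omega
  rw [sorted_getD_le_iff hs hj t]
  have hcount : (Multiset.sort (Multiset.map v Finset.univ.val) (· ≤ ·)).countP
      (fun x => decide (x ≤ t)) = (Finset.univ.filter (fun i => v i ≤ t)).card := by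
    have h1 : Multiset.countP (· ≤ t)
        ((Multiset.sort (Multiset.map v Finset.univ.val) (· ≤ ·) : List ℝ) : Multiset ℝ)
        = Multiset.countP (· ≤ t) (Multiset.map v Finset.univ.val) := by
      rw [Multiset.sort_eq]
    rw [Multiset.coe_countP] at h1
    rw [h1, Multiset.countP_map]
    rfl
  rw [hcount]
  omega

lemma measurable_kthSmallest {N k : ℕ} (hk1 : 1 ≤ k) (hkN : k ≤ N)
    {Ω : Type*} [MeasurableSpace Ω] {v : Fin N → Ω → ℝ} (hv : ∀ i, Measurable (v i)) :
    Measurable (fun ω => kthSmallest k (fun i => v i ω)) := by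
  classical
  apply measurable_of_Iic
  intro t
  have heq : (fun ω => kthSmallest k (fun i => v i ω)) ⁻¹' Set.Iic t
      = ⋃ (s : Finset (Fin N)) (_ : k ≤ s.card), ⋂ i ∈ (s : Set (Fin N)), {ω | v i ω ≤ t} := by
    ext ω
    simp only [Set.mem_preimage, Set.mem_Iic, kthSmallest_le_iff hk1 hkN,
      Set.mem_iUnion, Set.mem_iInter, Set.mem_setOf_eq, Finset.mem_coe]
    constructor
    · intro h
      exact ⟨Finset.univ.filter (fun i => v i ω ≤ t), h,
        fun i hi => (Finset.mem_filter.mp hi).2⟩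
    · rintro ⟨s, hs, hmem⟩
      exact hs.trans (Finset.card_le_card fun i hi =>
        Finset.mem_filter.mpr ⟨Finset.mem_univ _, hmem i hi⟩)
  rw [heq]
  exact MeasurableSet.iUnion fun s => MeasurableSet.iUnion fun _ =>
    MeasurableSet.biInter (Set.to_countable _)
      (fun i _ => (hv i) measurableSet_Iic)

lemma kthSmallest_comp_perm {N k : ℕ} (v : Fin N → ℝ) (σ : Equiv.Perm (Fin N)) :
    kthSmallest k (v ∘ σ) = kthSmallest k v := by
  unfold kthSmallest
  have : Multiset.map (v ∘ σ) Finset.univ.val = Multiset.map v Finset.univ.val := by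
    rw [← Multiset.map_map]
    congr 1
    have := congrArg Finset.val (Finset.map_univ_equiv σ)
    rwa [Finset.map_val, Equiv.coe_toEmbedding] at this
  rw [this]

lemma exists_perm_comp {n N : ℕ} {f g : Fin n → Fin N}
    (hf : Function.Injective f) (hg : Function.Injective g)
    (h : Set.range f = Set.range g) : ∃ σ : Equiv.Perm (Fin n), g ∘ σ = f := by
  classical
  refine ⟨(Equiv.ofInjective f hf).trans ((Equiv.setCongr h).trans
    (Equiv.ofInjective g hg).symm), ?_⟩
  funext j
  simp only [Function.comp_apply, Equiv.trans_apply, Equiv.setCongr_apply]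
  exact Equiv.apply_ofInjective_symm hg _

lemma symm_eq_of_range {n N : ℕ} {β γ : Type*} (A : (Fin n → β) → γ)
    (hA : ∀ σ : Equiv.Perm (Fin n), ∀ D, A (D ∘ σ) = A D) (W : Fin N → β)
    {f g : Fin n → Fin N} (hf : Function.Injective f) (hg : Function.Injective g)
    (h : Set.range f = Set.range g) : A (W ∘ f) = A (W ∘ g) := by
  obtain ⟨σ, hσ⟩ := exists_perm_comp hf hg h
  calc A (W ∘ f) = A ((W ∘ g) ∘ σ) := by rw [← hσ]; rfl
  _ = A (W ∘ g) := hA σ _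

set_option maxHeartbeats 2000000 in
/-- **jackknife coverage lower bound for stable symmetric algorithms.**
Setting: `n = m + 1 ≥ 2` training points `Z i.castSucc`, `i : Fin (m+1)`, and a test point
`(X, Y) = Z (last)`, all i.i.d. in `𝒳 × ℝ`. `An` (on `n` points) and `Am` (on `n − 1` points)
form a symmetric regression algorithm: jointly measurable in (data, test point) and invariant
under permutations of the data. `f̂ ω = An (training data)`, and for `i : Fin (m+1)` the
leave-one-out predictor is `Am` applied to the training data with the `i`-th point removed,
with LOO error `r i ω = |Y_i − f̂^{−i}(X_i)|`. Assuming `(ε, ν)`-stability,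
`P(|f̂(X) − f̂^{−i}(X)| > ε) ≤ ν` for all `i`, and `1/(n+1) ≤ α`, `α + √ν < 1`, we get
`P(|Y − f̂(X)| ≤ q_{n,α}{r i} + ε) ≥ 1 − α − 2√ν`. -/
theorem stmt17 {𝒳 : Type*} [MeasurableSpace 𝒳]
    {Ω : Type*} [MeasurableSpace Ω] (P : Measure Ω) [IsProbabilityMeasure P]
    (m : ℕ) (hm : 1 ≤ m)
    (An : (Fin (m+1) → 𝒳 × ℝ) → 𝒳 → ℝ)
    (Am : (Fin m → 𝒳 × ℝ) → 𝒳 → ℝ)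
    (hAnMeas : Measurable (fun p : (Fin (m+1) → 𝒳 × ℝ) × 𝒳 => An p.1 p.2))
    (hAmMeas : Measurable (fun p : (Fin m → 𝒳 × ℝ) × 𝒳 => Am p.1 p.2))
    (hAnSymm : ∀ σ : Equiv.Perm (Fin (m+1)), ∀ D, An (D ∘ σ) = An D)
    (hAmSymm : ∀ σ : Equiv.Perm (Fin m), ∀ D, Am (D ∘ σ) = Am D)
    (Z : Fin (m+2) → Ω → 𝒳 × ℝ)
    (hZmeas : ∀ i, Measurable (Z i))
    (hindep : iIndepFun Z P)
    (hident : ∀ i, IdentDistrib (Z i) (Z 0) P P)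
    (ε ν : ℝ) (hε : 0 ≤ ε) (hν : ν ∈ Set.Ioo (0:ℝ) 1)
    (hstable : ∀ i : Fin (m+1),
      P {ω | ε <
          |An (fun j : Fin (m+1) => Z j.castSucc ω) ((Z (Fin.last (m+1)) ω).1)
            - Am (fun j : Fin m => Z ((i.succAbove j).castSucc) ω)
                ((Z (Fin.last (m+1)) ω).1)|}
        ≤ ENNReal.ofReal ν)
    (α : ℝ) (hα1 : 1/((m:ℝ)+2) ≤ α) (hα2 : α + Real.sqrt ν < 1) :
    1 - α - 2 * Real.sqrt ν ≤
      (P {ω |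
        |(Z (Fin.last (m+1)) ω).2
            - An (fun j : Fin (m+1) => Z j.castSucc ω) ((Z (Fin.last (m+1)) ω).1)|
          ≤ empQuantile α
              (fun i : Fin (m+1) =>
                |(Z i.castSucc ω).2
                  - Am (fun j : Fin m => Z ((i.succAbove j).castSucc) ω)
                      ((Z i.castSucc ω).1)|)
            + ε}).toReal := by
  
  classical
  -- basic numeric facts
  have hν0 : 0 < ν := hν.1
  have hν1 : ν < 1 := hν.2
  have hsν : 0 < Real.sqrt ν := Real.sqrt_pos.mpr hν0
  have hα0 : 0 < α := lt_of_lt_of_le (by positivity) hα1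
  have hαlt : α < 1 := by nlinarith [hsν]
  -- the joint law of the pool is an iid product
  set μ0 : Measure (𝒳 × ℝ) := P.map (Z 0) with hμ0
  haveI : IsProbabilityMeasure μ0 := Measure.isProbabilityMeasure_map (hZmeas 0).aemeasurable
  set V : Ω → Fin (m+2) → 𝒳 × ℝ := fun ω i => Z i ω with hV
  have hVmeas : Measurable V := measurable_pi_lambda _ fun i => hZmeas i
  have hlaw : P.map V = Measure.pi (fun _ : Fin (m+2) => μ0) := by
    refine (Measure.pi_eq fun s hs => ?_).symm
    rw [Measure.map_apply hVmeas (MeasurableSet.univ_pi hs)]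
    have hpre : V ⁻¹' Set.pi Set.univ s = ⋂ i ∈ Finset.univ, Z i ⁻¹' s i := by
      ext ω; simp [hV, Set.mem_pi]
    rw [hpre, hindep.measure_inter_preimage_eq_mul Finset.univ (fun i _ => hs i)]
    exact Finset.prod_congr rfl fun i _ => by
      rw [← Measure.map_apply (hZmeas i) (hs i), (hident i).map_eq]
  have hprecomp : ∀ τ : Equiv.Perm (Fin (m+2)),
      MeasurePreserving (fun W : Fin (m+2) → 𝒳 × ℝ => W ∘ ⇑τ)
        (Measure.pi fun _ : Fin (m+2) => μ0) (Measure.pi fun _ : Fin (m+2) => μ0) := by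
    intro τ
    have h := measurePreserving_piCongrLeft (fun _ : Fin (m+2) => μ0) τ.symm
    have hco : ⇑(MeasurableEquiv.piCongrLeft (fun _ : Fin (m+2) => (𝒳 × ℝ)) τ.symm)
        = fun W : Fin (m+2) → 𝒳 × ℝ => W ∘ ⇑τ := by
      funext W
      funext j
      have h2 := Equiv.piCongrLeft_apply_apply (fun _ : Fin (m+2) => (𝒳 × ℝ)) τ.symm W (τ j)
      rw [Equiv.symm_apply_apply] at h2
      rw [MeasurableEquiv.coe_piCongrLeft]
      exact h2
    rwa [hco] at h
  have hperm : ∀ τ : Equiv.Perm (Fin (m+2)), ∀ s : Set (Fin (m+2) → 𝒳 × ℝ),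
      MeasurableSet s → P {ω | V ω ∘ ⇑τ ∈ s} = P {ω | V ω ∈ s} := by
    intro τ s hs
    have hmp : Measurable (fun W : Fin (m+2) → 𝒳 × ℝ => W ∘ ⇑τ) :=
      measurable_pi_lambda _ fun j => measurable_pi_apply (τ j)
    have h1 : P {ω | V ω ∘ ⇑τ ∈ s} = (P.map V) ((fun W : Fin (m+2) → 𝒳 × ℝ => W ∘ ⇑τ) ⁻¹' s) := by
      rw [Measure.map_apply hVmeas (hmp hs)]; rfl
    rw [h1, hlaw, (hprecomp τ).measure_preimage hs.nullMeasurableSet, ← hlaw,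
      Measure.map_apply hVmeas hs]
    rfl
  -- residual functions on the pool space
  set ρf : (Fin (m+2) → 𝒳 × ℝ) → Fin (m+2) → ℝ :=
    fun W l => |(W l).2 - An (fun j => W (l.succAbove j)) ((W l).1)| with hρf
  set rf : (Fin (m+2) → 𝒳 × ℝ) → Fin (m+1) → ℝ :=
    fun W i => |(W i.castSucc).2
      - Am (fun j => W ((i.succAbove j).castSucc)) ((W i.castSucc).1)| with hrf
  set df : (Fin (m+2) → 𝒳 × ℝ) → Fin (m+1) → ℝ :=
    fun W i => |An (fun j => W (i.castSucc.succAbove j)) ((W i.castSucc).1)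
      - Am (fun j => W ((i.succAbove j).castSucc)) ((W i.castSucc).1)| with hdf
  have hcastRange : Set.range (Fin.castSucc : Fin (m+1) → Fin (m+2)) = {Fin.last (m+1)}ᶜ := by
    rw [← Fin.succAbove_last]
    exact Fin.range_succAbove _
  have himgcompl : ∀ τ : Equiv.Perm (Fin (m+2)), ∀ c : Fin (m+2),
      ⇑τ '' ({c}ᶜ) = {τ c}ᶜ := by
    intro τ c
    rw [Set.image_compl_eq τ.bijective, Set.image_singleton]
  have hρperm : ∀ (τ : Equiv.Perm (Fin (m+2))) (W : Fin (m+2) → 𝒳 × ℝ) (l : Fin (m+2)),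
      ρf (W ∘ ⇑τ) l = ρf W (τ l) := by
    intro τ W l
    have h1 : An (W ∘ (⇑τ ∘ l.succAbove)) = An (W ∘ (τ l).succAbove) := by
      refine symm_eq_of_range An hAnSymm W
        (τ.injective.comp (Fin.succAbove_right_injective))
        (Fin.succAbove_right_injective) ?_
      rw [Set.range_comp, Fin.range_succAbove, himgcompl, Fin.range_succAbove]
    simp only [hρf, Function.comp_apply]
    have h2 : (fun j => W (τ (l.succAbove j))) = W ∘ (⇑τ ∘ l.succAbove) := rfl
    rw [h2, h1]
    rfl
  have hρlast : ∀ W : Fin (m+2) → 𝒳 × ℝ, ρf W (Fin.last (m+1))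
      = |(W (Fin.last (m+1))).2 - An (fun j => W j.castSucc) ((W (Fin.last (m+1))).1)| := by
    intro W
    simp only [hρf, Fin.succAbove_last]
  have hgap : ∀ (W : Fin (m+2) → 𝒳 × ℝ) (i : Fin (m+1)),
      |ρf W i.castSucc - rf W i| ≤ df W i := by
    intro W i
    have h := abs_abs_sub_abs_le_abs_sub
      ((W i.castSucc).2 - An (fun j => W (i.castSucc.succAbove j)) ((W i.castSucc).1))
      ((W i.castSucc).2 - Am (fun j => W ((i.succAbove j).castSucc)) ((W i.castSucc).1))
    have h2 : (W i.castSucc).2 - An (fun j => W (i.castSucc.succAbove j)) ((W i.castSucc).1)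
        - ((W i.castSucc).2 - Am (fun j => W ((i.succAbove j).castSucc)) ((W i.castSucc).1))
        = -(An (fun j => W (i.castSucc.succAbove j)) ((W i.castSucc).1)
          - Am (fun j => W ((i.succAbove j).castSucc)) ((W i.castSucc).1)) := by ring
    rw [h2, abs_neg] at h
    exact h
  -- numeric constants
  set k : ℕ := ⌈(1 - α) * (((m+1 : ℕ) : ℝ) + 1)⌉₊ with hk
  set b : ℕ := ⌊Real.sqrt ν * ((m : ℝ) + 2)⌋₊ with hb
  have hcast2 : (((m+1 : ℕ) : ℝ) + 1) = (m : ℝ) + 2 := by push_cast; ring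
  have hm2 : (0:ℝ) < (m:ℝ) + 2 := by positivity
  have hkreal : (1 - α) * ((m:ℝ)+2) ≤ (k:ℝ) := by
    rw [hk, ← hcast2]
    exact Nat.le_ceil _
  have hk1 : 1 ≤ k := by
    rw [hk]
    refine Nat.one_le_iff_ne_zero.mpr (Nat.ceil_pos.mpr ?_).ne'
    rw [hcast2]
    nlinarith
  have hkn : k ≤ m+1 := by
    rw [hk]
    apply Nat.ceil_le.mpr
    rw [hcast2]
    have h1 : 1 ≤ α * ((m:ℝ)+2) := by
      rw [div_le_iff₀ hm2] at hα1
      linarith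
    push_cast
    nlinarith
  have hbreal : (b:ℝ) ≤ Real.sqrt ν * ((m:ℝ)+2) := Nat.floor_le (by positivity)
  have hbk : b < k := by
    have h1 : (b:ℝ) < (k:ℝ) := by nlinarith
    exact_mod_cast h1
  set j : ℕ := k - b with hj
  have hj1 : 1 ≤ j := by omega
  have hjn : j ≤ m + 2 := by omega
  have hjreal : (1 - α - Real.sqrt ν) * ((m:ℝ)+2) ≤ (j:ℝ) := by
    have h1 : (j:ℝ) = (k:ℝ) - (b:ℝ) := by
      rw [hj, Nat.cast_sub hbk.le]
    rw [h1]
    nlinarith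
  -- events
  set q : Ω → ℝ := fun ω => kthSmallest j (ρf (V ω)) with hq
  set S : Fin (m+2) → Set Ω := fun c => {ω | ρf (V ω) c ≤ q ω} with hS
  set bad : Fin (m+1) → Set Ω := fun i => {ω | ε < df (V ω) i} with hbad
  have hρWmeas : ∀ l : Fin (m+2), Measurable (fun W : Fin (m+2) → 𝒳 × ℝ => ρf W l) := by
    intro l
    simp only [hρf]
    apply Measurable.abs
    exact ((measurable_pi_apply l).snd).sub
      (hAnMeas.comp (Measurable.prodMk (measurable_pi_lambda _ fun j' => measurable_pi_apply _)
        ((measurable_pi_apply l).fst)))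
  have hdWmeas : ∀ i : Fin (m+1), Measurable (fun W : Fin (m+2) → 𝒳 × ℝ => df W i) := by
    intro i
    simp only [hdf]
    apply Measurable.abs
    exact (hAnMeas.comp (Measurable.prodMk (measurable_pi_lambda _ fun j' => measurable_pi_apply _)
        ((measurable_pi_apply _).fst))).sub
      (hAmMeas.comp (Measurable.prodMk (measurable_pi_lambda _ fun j' => measurable_pi_apply _)
        ((measurable_pi_apply _).fst)))
  have hρmeas : ∀ l : Fin (m+2), Measurable (fun ω => ρf (V ω) l) :=
    fun l => (hρWmeas l).comp hVmeas
  have hqmeas : Measurable q := measurable_kthSmallest hj1 hjn hρmeas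
  have hSmeas : ∀ c, MeasurableSet (S c) := fun c => measurableSet_le (hρmeas c) hqmeas
  have hbadmeas : ∀ i, MeasurableSet (bad i) :=
    fun i => measurableSet_lt measurable_const ((hdWmeas i).comp hVmeas)
  -- exchangeability: all S c have the same probability
  have hSeq : ∀ c : Fin (m+2), P (S c) = P (S (Fin.last (m+1))) := by
    intro c
    set τ : Equiv.Perm (Fin (m+2)) := Equiv.swap c (Fin.last (m+1)) with hτ
    have hτlast : τ (Fin.last (m+1)) = c := Equiv.swap_apply_right _ _
    set s : Set (Fin (m+2) → 𝒳 × ℝ) :=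
      {W | ρf W (Fin.last (m+1)) ≤ kthSmallest j (ρf W)} with hsdef
    have hsmeas : MeasurableSet s :=
      measurableSet_le (hρWmeas _) (measurable_kthSmallest hj1 hjn hρWmeas)
    have h1 : {ω | V ω ∘ ⇑τ ∈ s} = S c := by
      ext ω
      simp only [hsdef, Set.mem_setOf_eq, hS]
      have e1 : ρf (V ω ∘ ⇑τ) (Fin.last (m+1)) = ρf (V ω) c := by
        rw [hρperm, hτlast]
      have e2 : kthSmallest j (ρf (V ω ∘ ⇑τ)) = kthSmallest j (ρf (V ω)) := by
        have h3 : ρf (V ω ∘ ⇑τ) = (ρf (V ω)) ∘ ⇑τ := funext fun l => hρperm τ (V ω) l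
        rw [h3, kthSmallest_comp_perm]
      rw [e1, e2]
    have h2 : {ω | V ω ∈ s} = S (Fin.last (m+1)) := rfl
    rw [← h1, ← h2]
    exact hperm τ s hsmeas
  -- the rank lower bound
  have hjle : (j : ℝ≥0∞) ≤ ((m+2:ℕ) : ℝ≥0∞) * P (S (Fin.last (m+1))) := by
    have hpt : ∀ ω, (j : ℝ≥0∞) ≤ ∑ c : Fin (m+2), (S c).indicator (fun _ => (1:ℝ≥0∞)) ω := by
      intro ω
      have hcard : j ≤ (Finset.univ.filter (fun c : Fin (m+2) => ρf (V ω) c ≤ q ω)).card :=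
        (kthSmallest_le_iff hj1 hjn (ρf (V ω)) (q ω)).mp le_rfl
      calc (j : ℝ≥0∞)
          ≤ ((Finset.univ.filter (fun c : Fin (m+2) => ρf (V ω) c ≤ q ω)).card : ℝ≥0∞) := by
            exact_mod_cast hcard
      _ = ∑ c : Fin (m+2), (S c).indicator (fun _ => (1:ℝ≥0∞)) ω := by
            rw [Finset.card_filter]
            push_cast
            refine Finset.sum_congr rfl fun c _ => ?_
            by_cases h : ρf (V ω) c ≤ q ω <;> simp [Set.indicator_apply, hS, h]
    have hint : ∀ c, ∫⁻ ω, (S c).indicator (fun _ => (1:ℝ≥0∞)) ω ∂P = P (S c) := by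
      intro c
      rw [lintegral_indicator (hSmeas c)]
      simp
    calc (j:ℝ≥0∞) = ∫⁻ _, (j:ℝ≥0∞) ∂P := by simp
    _ ≤ ∫⁻ ω, ∑ c : Fin (m+2), (S c).indicator (fun _ => (1:ℝ≥0∞)) ω ∂P := lintegral_mono hpt
    _ = ∑ c : Fin (m+2), P (S c) := by
        rw [lintegral_finset_sum _ (fun c _ => (measurable_const.indicator (hSmeas c)))]
        exact Finset.sum_congr rfl fun c _ => hint c
    _ = ∑ _c : Fin (m+2), P (S (Fin.last (m+1))) := Finset.sum_congr rfl fun c _ => hSeq c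
    _ = ((m+2:ℕ) : ℝ≥0∞) * P (S (Fin.last (m+1))) := by
        rw [Finset.sum_const, Finset.card_univ, Fintype.card_fin, nsmul_eq_mul]
  -- stability transfer to training points
  have hbadle : ∀ i : Fin (m+1), P (bad i) ≤ ENNReal.ofReal ν := by
    intro i
    set τ : Equiv.Perm (Fin (m+2)) := Equiv.swap i.castSucc (Fin.last (m+1)) with hτ
    set s : Set (Fin (m+2) → 𝒳 × ℝ) := {W | ε <
        |An (fun j' : Fin (m+1) => W j'.castSucc) ((W (Fin.last (m+1))).1)
          - Am (fun j' : Fin m => W ((i.succAbove j').castSucc)) ((W (Fin.last (m+1))).1)|}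
      with hsdef
    have hsmeas : MeasurableSet s := by
      apply measurableSet_lt measurable_const
      apply Measurable.abs
      exact (hAnMeas.comp (Measurable.prodMk
          (measurable_pi_lambda _ fun j' => measurable_pi_apply _)
          ((measurable_pi_apply _).fst))).sub
        (hAmMeas.comp (Measurable.prodMk
          (measurable_pi_lambda _ fun j' => measurable_pi_apply _)
          ((measurable_pi_apply _).fst)))
    have hτlast : τ (Fin.last (m+1)) = i.castSucc := Equiv.swap_apply_right _ _
    have hfix : ∀ j' : Fin m, τ ((i.succAbove j').castSucc) = (i.succAbove j').castSucc := by
      intro j'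
      apply Equiv.swap_apply_of_ne_of_ne
      · exact fun h => Fin.succAbove_ne i j' (Fin.castSucc_injective _ h)
      · exact (Fin.castSucc_lt_last _).ne
    have h1 : {ω | V ω ∘ ⇑τ ∈ s} = bad i := by
      ext ω
      simp only [hsdef, Set.mem_setOf_eq, hbad, Function.comp_apply, hτlast, hfix]
      have hAneq : An (fun j' : Fin (m+1) => V ω (τ j'.castSucc))
          = An (fun j' : Fin (m+1) => V ω (i.castSucc.succAbove j')) := by
        have h2 : An ((V ω) ∘ (⇑τ ∘ Fin.castSucc)) = An ((V ω) ∘ (i.castSucc.succAbove)) := by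
          refine symm_eq_of_range An hAnSymm (V ω)
            (τ.injective.comp (Fin.castSucc_injective _))
            (Fin.succAbove_right_injective) ?_
          rw [Set.range_comp, hcastRange, himgcompl, hτlast, Fin.range_succAbove]
        exact h2
      rw [hAneq]
    calc P (bad i) = P {ω | V ω ∘ ⇑τ ∈ s} := by rw [h1]
    _ = P {ω | V ω ∈ s} := hperm τ s hsmeas
    _ ≤ ENNReal.ofReal ν := hstable i
  -- Markov bound on the number of unstable indices
  set g : Ω → ℝ≥0∞ := fun ω => ∑ i : Fin (m+1), (bad i).indicator (fun _ => (1:ℝ≥0∞)) ω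
    with hg
  have hgmeas : Measurable g := by
    simp only [hg]
    exact Finset.measurable_sum _ fun i _ => measurable_const.indicator (hbadmeas i)
  set Bbig : Set Ω := {ω | ((b:ℝ≥0∞) + 1) ≤ g ω} with hBbigdef
  have hgcard : ∀ ω, g ω
      = ((Finset.univ.filter (fun i : Fin (m+1) => ε < df (V ω) i)).card : ℝ≥0∞) := by
    intro ω
    rw [hg, Finset.card_filter]
    push_cast
    refine Finset.sum_congr rfl fun i _ => ?_
    by_cases h : ε < df (V ω) i <;> simp [Set.indicator_apply, hbad, h]
  have hBbigle : P Bbig ≤ ENNReal.ofReal (Real.sqrt ν) := by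
    have h1 := mul_meas_ge_le_lintegral₀ (μ := P) hgmeas.aemeasurable ((b:ℝ≥0∞)+1)
    have h2 : ∫⁻ ω, g ω ∂P = ∑ i : Fin (m+1), P (bad i) := by
      rw [hg]
      rw [lintegral_finset_sum _ (fun i _ => (measurable_const.indicator (hbadmeas i)))]
      refine Finset.sum_congr rfl fun i _ => ?_
      rw [lintegral_indicator (hbadmeas i)]
      simp
    have h3 : ∑ i : Fin (m+1), P (bad i) ≤ ((m+1:ℕ):ℝ≥0∞) * ENNReal.ofReal ν := by
      calc ∑ i : Fin (m+1), P (bad i) ≤ ∑ _i : Fin (m+1), ENNReal.ofReal ν :=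
            Finset.sum_le_sum fun i _ => hbadle i
      _ = ((m+1:ℕ):ℝ≥0∞) * ENNReal.ofReal ν := by
          rw [Finset.sum_const, Finset.card_univ, Fintype.card_fin, nsmul_eq_mul]
    have h4 : ((m+1:ℕ):ℝ≥0∞) * ENNReal.ofReal ν
        ≤ ((b:ℝ≥0∞)+1) * ENNReal.ofReal (Real.sqrt ν) := by
      have hr : ((m+1:ℕ):ℝ) * ν ≤ ((b:ℝ)+1) * Real.sqrt ν := by
        have hb1 : Real.sqrt ν * ((m:ℝ)+2) < (b:ℝ) + 1 := Nat.lt_floor_add_one _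
        have hsq : Real.sqrt ν * Real.sqrt ν = ν := Real.mul_self_sqrt hν0.le
        have hmc : ((m+1:ℕ):ℝ) = (m:ℝ)+1 := by push_cast; ring
        rw [hmc]
        nlinarith
      calc ((m+1:ℕ):ℝ≥0∞) * ENNReal.ofReal ν
          = ENNReal.ofReal (((m+1:ℕ):ℝ) * ν) := by
            rw [ENNReal.ofReal_mul (by positivity), ENNReal.ofReal_natCast]
      _ ≤ ENNReal.ofReal (((b:ℝ)+1) * Real.sqrt ν) := ENNReal.ofReal_le_ofReal hr
      _ = ((b:ℝ≥0∞)+1) * ENNReal.ofReal (Real.sqrt ν) := by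
          rw [ENNReal.ofReal_mul (by positivity)]
          congr 1
          rw [ENNReal.ofReal_add (by positivity) zero_le_one, ENNReal.ofReal_natCast,
            ENNReal.ofReal_one]
    have h5 : ((b:ℝ≥0∞)+1) * P Bbig ≤ ((b:ℝ≥0∞)+1) * ENNReal.ofReal (Real.sqrt ν) := by
      refine le_trans ?_ (le_trans (h2 ▸ h1) (le_trans h3 h4))
      exact le_of_eq rfl
    have hne0 : ((b:ℝ≥0∞)+1) ≠ 0 := by simp
    have hnetop : ((b:ℝ≥0∞)+1) ≠ ⊤ := by
      simp [ENNReal.add_ne_top]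
    exact (ENNReal.mul_le_mul_iff_right hne0 hnetop).mp h5
  -- name the target event
  set Tset : Set Ω := {ω |
        |(Z (Fin.last (m+1)) ω).2
            - An (fun j : Fin (m+1) => Z j.castSucc ω) ((Z (Fin.last (m+1)) ω).1)|
          ≤ empQuantile α
              (fun i : Fin (m+1) =>
                |(Z i.castSucc ω).2
                  - Am (fun j : Fin m => Z ((i.succAbove j).castSucc) ω)
                      ((Z i.castSucc ω).1)|)
            + ε} with hTset
  -- key inclusion
  have hsub : S (Fin.last (m+1)) ⊆ Tset ∪ Bbig := by
    intro ω hω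
    by_cases hB : ω ∈ Bbig
    · exact Or.inr hB
    left
    have hcardbad : (Finset.univ.filter (fun i : Fin (m+1) => ε < df (V ω) i)).card ≤ b := by
      by_contra hc
      push_neg at hc
      apply hB
      rw [hBbigdef, Set.mem_setOf_eq, hgcard]
      have hc' : (b+1 : ℕ) ≤ (Finset.univ.filter
          (fun i : Fin (m+1) => ε < df (V ω) i)).card := hc
      calc ((b:ℝ≥0∞)+1) = ((b+1 : ℕ) : ℝ≥0∞) := by push_cast; ring
      _ ≤ _ := by exact_mod_cast hc'
    have hA : k ≤ (Finset.univ.filter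
        (fun i : Fin (m+1) => rf (V ω) i ≤ kthSmallest k (rf (V ω)))).card :=
      (kthSmallest_le_iff hk1 hkn (rf (V ω)) _).mp le_rfl
    set G : Finset (Fin (m+1)) := (Finset.univ.filter
        (fun i : Fin (m+1) => rf (V ω) i ≤ kthSmallest k (rf (V ω)))) \
      (Finset.univ.filter (fun i : Fin (m+1) => ε < df (V ω) i)) with hG
    have hGcard : j ≤ G.card := by
      have h6 := Finset.le_card_sdiff
        (Finset.univ.filter (fun i : Fin (m+1) => ε < df (V ω) i))
        (Finset.univ.filter (fun i : Fin (m+1) => rf (V ω) i ≤ kthSmallest k (rf (V ω))))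
      rw [← hG] at h6
      omega
    have hGsub : ∀ i ∈ G, ρf (V ω) i.castSucc ≤ kthSmallest k (rf (V ω)) + ε := by
      intro i hi
      rw [hG, Finset.mem_sdiff, Finset.mem_filter] at hi
      have h1 : rf (V ω) i ≤ kthSmallest k (rf (V ω)) := hi.1.2
      have h2 : df (V ω) i ≤ ε :=
        le_of_not_gt fun hcon => hi.2 (Finset.mem_filter.mpr ⟨Finset.mem_univ _, hcon⟩)
      have h3 := hgap (V ω) i
      have h4 : ρf (V ω) i.castSucc - rf (V ω) i ≤ ε :=
        le_trans (le_trans (le_abs_self _) h3) h2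
      linarith
    have hq2 : kthSmallest j (ρf (V ω)) ≤ kthSmallest k (rf (V ω)) + ε := by
      refine (kthSmallest_le_iff hj1 hjn (ρf (V ω)) _).mpr ?_
      calc j ≤ G.card := hGcard
      _ = (G.image Fin.castSucc).card :=
          (Finset.card_image_of_injective _ (Fin.castSucc_injective _)).symm
      _ ≤ (Finset.univ.filter
            (fun c : Fin (m+2) => ρf (V ω) c ≤ kthSmallest k (rf (V ω)) + ε)).card := by
          apply Finset.card_le_card
          intro c hc
          rw [Finset.mem_image] at hc
          obtain ⟨i, hi, rfl⟩ := hc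
          exact Finset.mem_filter.mpr ⟨Finset.mem_univ _, hGsub i hi⟩
    have hω' : ρf (V ω) (Fin.last (m+1)) ≤ kthSmallest j (ρf (V ω)) := hω
    rw [hTset, Set.mem_setOf_eq]
    have hEq1 : |(Z (Fin.last (m+1)) ω).2
        - An (fun j'' : Fin (m+1) => Z j''.castSucc ω) ((Z (Fin.last (m+1)) ω).1)|
        = ρf (V ω) (Fin.last (m+1)) := (hρlast (V ω)).symm
    have hEq2 : empQuantile α (fun i : Fin (m+1) =>
        |(Z i.castSucc ω).2 - Am (fun j'' : Fin m => Z ((i.succAbove j'').castSucc) ω)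
          ((Z i.castSucc ω).1)|) = kthSmallest k (rf (V ω)) := rfl
    rw [hEq1, hEq2]
    exact le_trans hω' hq2
  -- assemble
  have hPS : P (S (Fin.last (m+1))) ≤ P Tset + P Bbig :=
    le_trans (measure_mono hsub) (measure_union_le _ _)
  have hj2 : (j:ℝ) ≤ ((m:ℝ)+2) * (P (S (Fin.last (m+1)))).toReal := by
    have h7 := ENNReal.toReal_mono (ENNReal.mul_ne_top (by simp) (measure_ne_top _ _)) hjle
    rw [ENNReal.toReal_mul] at h7
    simp only [ENNReal.toReal_natCast] at h7
    calc (j:ℝ) ≤ ((m+2:ℕ):ℝ) * (P (S (Fin.last (m+1)))).toReal := h7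
    _ = ((m:ℝ)+2) * (P (S (Fin.last (m+1)))).toReal := by push_cast; ring
  have h8 : (P (S (Fin.last (m+1)))).toReal ≤ (P Tset).toReal + (P Bbig).toReal := by
    have h9 := ENNReal.toReal_mono
      (ENNReal.add_ne_top.mpr ⟨measure_ne_top _ _, measure_ne_top _ _⟩) hPS
    rwa [ENNReal.toReal_add (measure_ne_top _ _) (measure_ne_top _ _)] at h9
  have h10 : (P Bbig).toReal ≤ Real.sqrt ν :=
    ENNReal.toReal_le_of_le_ofReal hsν.le hBbigle
  have h12 : (1 - α - Real.sqrt ν) * ((m:ℝ)+2)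
      ≤ ((P Tset).toReal + Real.sqrt ν) * ((m:ℝ)+2) := by nlinarith
  have h13 := le_of_mul_le_mul_right h12 hm2
  linarith
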